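/- Let ε ∈ (0,1), and let v = (v_1,…,v_n) and ṽ = (ṽ_1,…,ṽ_n) be two vectors of positive preference weights satisfying (1−ε)·v_i ≤ ṽ_i ≤ v_i for every i ∈ {1,…,n}. Writing OPT^DP_w({1,…,n}) for the optimal dynamic value computed with the weight vector w, one has (1−ε)·OPT^DP_v({1,…,n}) ≤ OPT^DP_ṽ({1,…,n}) ≤ (1/(1−ε))·OPT^DP_v({1,…,n}). -/

import Mathlib

open Finset

/-- MNL choice probability of product `i` when assortment `S` is offered. -/
noncomputable def phi {n : ℕ} (v : Fin n → ℝ) (S : Finset (Fin n)) (i : Fin n) : ℝ :=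
  v i / (1 + ∑ j ∈ S, v j)

/-- MNL no-purchase probability when assortment `S` is offered. -/
noncomputable def phi0 {n : ℕ} (v : Fin n → ℝ) (S : Finset (Fin n)) : ℝ :=
  1 / (1 + ∑ j ∈ S, v j)

/-- The dynamic-programming value functions `M_t(ℓ)` of the adaptive maximum load
problem over the universe `U`: `M_0(ℓ) = max_i ℓ_i` and
`M_t(ℓ) = max_{S ⊆ U} (φ_0(S)·M_{t-1}(ℓ) + ∑_{i∈S} φ_i(S)·M_{t-1}(ℓ + e_i))`. -/
noncomputable def dpVal {n : ℕ} (v : Fin n → ℝ) (U : Finset (Fin n)) :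
    ℕ → (Fin n → ℕ) → ℝ
  | 0, ℓ => ((Finset.univ.sup ℓ : ℕ) : ℝ)
  | t + 1, ℓ =>
      U.powerset.sup' ⟨∅, Finset.empty_mem_powerset U⟩ fun S =>
        phi0 v S * dpVal v U t ℓ +
          ∑ i ∈ S, phi v S i * dpVal v U t (Function.update ℓ i (ℓ i + 1))

/-- `OPT^DP(U) = M_T(0)`: the optimal expected maximum load achievable by an adaptive
policy offering assortments from the universe `U` to `T` sequentially arriving customers
making independent MNL choices. -/
noncomputable def dpOpt {n : ℕ} (v : Fin n → ℝ) (U : Finset (Fin n)) (T : ℕ) : ℝ :=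
  dpVal v U T fun _ => 0

section Aux

variable {n : ℕ}

lemma den_pos (v : Fin n → ℝ) (hv : ∀ i, 0 ≤ v i) (S : Finset (Fin n)) :
    0 < 1 + ∑ j ∈ S, v j := by
  have : 0 ≤ ∑ j ∈ S, v j := Finset.sum_nonneg fun j _ => hv j
  linarith

lemma phi_nonneg (v : Fin n → ℝ) (hv : ∀ i, 0 ≤ v i) (S : Finset (Fin n)) (i : Fin n) :
    0 ≤ phi v S i := div_nonneg (hv i) (den_pos v hv S).le

lemma phi0_nonneg (v : Fin n → ℝ) (hv : ∀ i, 0 ≤ v i) (S : Finset (Fin n)) :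
    0 ≤ phi0 v S := div_nonneg one_pos.le (den_pos v hv S).le

lemma phi_sum (v : Fin n → ℝ) (S : Finset (Fin n)) :
    ∑ i ∈ S, phi v S i = (∑ i ∈ S, v i) / (1 + ∑ j ∈ S, v j) := by
  rw [Finset.sum_div]; rfl

lemma phi0_eq (v : Fin n → ℝ) (hv : ∀ i, 0 ≤ v i) (S : Finset (Fin n)) :
    phi0 v S = 1 - ∑ i ∈ S, phi v S i := by
  rw [phi_sum, phi0]
  have h := den_pos v hv S
  field_simp
  ring

/-- Monotonicity of the value function in the load vector. -/
lemma dpVal_mono (v : Fin n → ℝ) (hv : ∀ i, 0 ≤ v i) (U : Finset (Fin n)) :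
    ∀ t (ℓ ℓ' : Fin n → ℕ), (∀ i, ℓ i ≤ ℓ' i) → dpVal v U t ℓ ≤ dpVal v U t ℓ' := by
  intro t
  induction t with
  | zero =>
    intro ℓ ℓ' h
    simp only [dpVal]
    exact_mod_cast Finset.sup_mono_fun fun i _ => h i
  | succ t ih =>
    intro ℓ ℓ' h
    rw [dpVal, dpVal]
    apply Finset.sup'_mono_fun
    intro S _
    refine add_le_add (mul_le_mul_of_nonneg_left (ih ℓ ℓ' h) (phi0_nonneg v hv S)) ?_
    refine Finset.sum_le_sum fun i _ => mul_le_mul_of_nonneg_left (ih _ _ ?_) (phi_nonneg v hv S i)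
    intro j
    by_cases hj : j = i
    · subst hj
      simp only [Function.update_self]
      exact Nat.add_le_add_right (h j) 1
    · simp only [Function.update_of_ne hj]
      exact h j

lemma dpVal_nonneg (v : Fin n → ℝ) (U : Finset (Fin n)) :
    ∀ t (ℓ : Fin n → ℕ), 0 ≤ dpVal v U t ℓ := by
  intro t
  induction t with
  | zero => intro ℓ; simp [dpVal]
  | succ t ih =>
    intro ℓ
    rw [dpVal]
    refine le_trans ?_ (Finset.le_sup' _ (Finset.empty_mem_powerset U))
    simp only [Finset.sum_empty, add_zero, phi0, Finset.sum_empty]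
    norm_num
    exact ih ℓ

/-- The auxiliary "deterministic drift" value function. -/
noncomputable def Kf (a : Fin n → ℝ) (ε : ℝ) : ℕ → (Fin n → ℝ) → ℝ
  | 0, x => if h : (Finset.univ : Finset (Fin n)).Nonempty then Finset.univ.sup' h x else 0
  | t + 1, x =>
      (Finset.univ : Finset (Fin n)).powerset.sup'
        ⟨∅, Finset.empty_mem_powerset _⟩ fun S =>
        phi0 a S * Kf a ε t x +
          ∑ i ∈ S, phi a S i * Kf a ε t (x + (1 - ε) • (Pi.single i 1 : Fin n → ℝ))


lemma le_Kf_succ (a : Fin n → ℝ) (ε : ℝ) (t : ℕ) (x : Fin n → ℝ) (S : Finset (Fin n)) :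
    phi0 a S * Kf a ε t x +
      ∑ i ∈ S, phi a S i * Kf a ε t (x + (1 - ε) • (Pi.single i 1 : Fin n → ℝ)) ≤
      Kf a ε (t + 1) x := by
  conv_rhs => rw [Kf]
  exact Finset.le_sup' (fun S => phi0 a S * Kf a ε t x +
    ∑ i ∈ S, phi a S i * Kf a ε t (x + (1 - ε) • (Pi.single i 1 : Fin n → ℝ)))
    (Finset.mem_powerset.mpr (Finset.subset_univ S))

lemma le_dpVal_succ (b : Fin n → ℝ) (t : ℕ) (ℓ : Fin n → ℕ) (S : Finset (Fin n)) :
    phi0 b S * dpVal b Finset.univ t ℓ +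
      ∑ i ∈ S, phi b S i * dpVal b Finset.univ t (Function.update ℓ i (ℓ i + 1)) ≤
      dpVal b Finset.univ (t + 1) ℓ := by
  conv_rhs => rw [dpVal]
  exact Finset.le_sup' (fun S => phi0 b S * dpVal b Finset.univ t ℓ +
    ∑ i ∈ S, phi b S i * dpVal b Finset.univ t (Function.update ℓ i (ℓ i + 1)))
    (Finset.mem_powerset.mpr (Finset.subset_univ S))

/-- Convexity inequality for `Kf` with weights `1-ε, ε`. -/
lemma Kf_convex (he : (Finset.univ : Finset (Fin n)).Nonempty)
    (a : Fin n → ℝ) (ha : ∀ i, 0 ≤ a i) (ε : ℝ) (hε0 : 0 ≤ ε) (hε1 : ε ≤ 1) :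
    ∀ t (x y : Fin n → ℝ),
      Kf a ε t ((1 - ε) • x + ε • y) ≤ (1 - ε) * Kf a ε t x + ε * Kf a ε t y := by
  have h1ε : (0:ℝ) ≤ 1 - ε := by linarith
  intro t
  induction t with
  | zero =>
    intro x y
    simp only [Kf, dif_pos he]
    apply Finset.sup'_le
    intro i _
    have h1 : x i ≤ Finset.univ.sup' he x := Finset.le_sup' x (Finset.mem_univ i)
    have h2 : y i ≤ Finset.univ.sup' he y := Finset.le_sup' y (Finset.mem_univ i)
    have hxy : ((1 - ε) • x + ε • y) i = (1 - ε) * x i + ε * y i := rfl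
    rw [hxy]
    have hb1 := mul_le_mul_of_nonneg_left h1 h1ε
    have hb2 := mul_le_mul_of_nonneg_left h2 hε0
    linarith
  | succ t ih =>
    intro x y
    rw [Kf]
    apply Finset.sup'_le
    intro S _
    have key : ∀ i : Fin n,
        (1 - ε) • x + ε • y + (1 - ε) • (Pi.single i 1 : Fin n → ℝ) =
          (1 - ε) • (x + (1 - ε) • (Pi.single i 1 : Fin n → ℝ)) +
            ε • (y + (1 - ε) • (Pi.single i 1 : Fin n → ℝ)) := by
      intro i; funext j
      by_cases hj : j = i <;>
        simp [Pi.single_apply, hj, smul_eq_mul] <;> ring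
    calc phi0 a S * Kf a ε t ((1 - ε) • x + ε • y) +
          ∑ i ∈ S, phi a S i *
            Kf a ε t ((1 - ε) • x + ε • y + (1 - ε) • (Pi.single i 1 : Fin n → ℝ))
        ≤ phi0 a S * ((1 - ε) * Kf a ε t x + ε * Kf a ε t y) +
          ∑ i ∈ S, phi a S i *
            ((1 - ε) * Kf a ε t (x + (1 - ε) • (Pi.single i 1 : Fin n → ℝ)) +
              ε * Kf a ε t (y + (1 - ε) • (Pi.single i 1 : Fin n → ℝ))) := by
          refine add_le_add (mul_le_mul_of_nonneg_left (ih x y) (phi0_nonneg a ha S)) ?_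
          refine Finset.sum_le_sum fun i _ => ?_
          refine mul_le_mul_of_nonneg_left ?_ (phi_nonneg a ha S i)
          rw [key i]
          exact ih _ _
      _ = (1 - ε) * (phi0 a S * Kf a ε t x +
            ∑ i ∈ S, phi a S i * Kf a ε t (x + (1 - ε) • (Pi.single i 1 : Fin n → ℝ))) +
          ε * (phi0 a S * Kf a ε t y +
            ∑ i ∈ S, phi a S i * Kf a ε t (y + (1 - ε) • (Pi.single i 1 : Fin n → ℝ))) := by
          have hs : ∑ i ∈ S, phi a S i *
              ((1 - ε) * Kf a ε t (x + (1 - ε) • (Pi.single i 1 : Fin n → ℝ)) +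
                ε * Kf a ε t (y + (1 - ε) • (Pi.single i 1 : Fin n → ℝ))) =
              (1 - ε) * (∑ i ∈ S, phi a S i *
                Kf a ε t (x + (1 - ε) • (Pi.single i 1 : Fin n → ℝ))) +
              ε * (∑ i ∈ S, phi a S i *
                Kf a ε t (y + (1 - ε) • (Pi.single i 1 : Fin n → ℝ))) := by
            rw [Finset.mul_sum, Finset.mul_sum, ← Finset.sum_add_distrib]
            exact Finset.sum_congr rfl fun i _ => by ring
          rw [hs]; ring
      _ ≤ (1 - ε) * Kf a ε (t + 1) x + ε * Kf a ε (t + 1) y :=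
          add_le_add (mul_le_mul_of_nonneg_left (le_Kf_succ a ε t x S) h1ε)
            (mul_le_mul_of_nonneg_left (le_Kf_succ a ε t y S) hε0)

/-- Scaling identity: `Kf` at `(1-ε)·ℓ` equals `(1-ε)` times the dpVal. -/
lemma Kf_scale (he : (Finset.univ : Finset (Fin n)).Nonempty)
    (a : Fin n → ℝ) (ε : ℝ) (hε1 : ε ≤ 1) :
    ∀ t (ℓ : Fin n → ℕ),
      Kf a ε t ((1 - ε) • fun i => (ℓ i : ℝ)) = (1 - ε) * dpVal a Finset.univ t ℓ := by
  have h1ε : (0:ℝ) ≤ 1 - ε := by linarith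
  have hmul : ∀ (x y : ℝ), (1 - ε) * (x ⊔ y) = ((1 - ε) * x) ⊔ ((1 - ε) * y) :=
    fun x y => mul_max_of_nonneg x y h1ε
  intro t
  induction t with
  | zero =>
    intro ℓ
    rw [Kf, dif_pos he, dpVal]
    have hcast : ((Finset.univ.sup ℓ : ℕ) : ℝ) = Finset.univ.sup' he fun i => (ℓ i : ℝ) := by
      rw [← Finset.sup'_eq_sup he ℓ]
      exact Nat.cast_finsetSup' ℓ he
    rw [hcast, Finset.comp_sup'_eq_sup'_comp he (fun z : ℝ => (1 - ε) * z) hmul]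
    apply Finset.sup'_congr he rfl
    intro i _
    rfl
  | succ t ih =>
    intro ℓ
    rw [Kf, dpVal,
      Finset.comp_sup'_eq_sup'_comp (⟨∅, Finset.empty_mem_powerset _⟩ :
        ((Finset.univ : Finset (Fin n)).powerset).Nonempty) (fun z : ℝ => (1 - ε) * z) hmul]
    apply Finset.sup'_congr ⟨∅, Finset.empty_mem_powerset _⟩ rfl
    intro S _
    have hupd : ∀ i : Fin n,
        ((1 - ε) • fun j => (ℓ j : ℝ)) + (1 - ε) • (Pi.single i 1 : Fin n → ℝ) =
          (1 - ε) • fun j => ((Function.update ℓ i (ℓ i + 1) j : ℕ) : ℝ) := by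
      intro i; funext j
      by_cases hj : j = i
      · subst hj
        simp only [Pi.add_apply, Pi.smul_apply, smul_eq_mul, Pi.single_eq_same,
          Function.update_self]
        push_cast
        ring
      · simp [Function.update_of_ne hj, Pi.single_apply, hj, smul_eq_mul]
    show phi0 a S * Kf a ε t ((1 - ε) • fun i => (ℓ i : ℝ)) +
        ∑ i ∈ S, phi a S i *
          Kf a ε t (((1 - ε) • fun j => (ℓ j : ℝ)) + (1 - ε) • (Pi.single i 1 : Fin n → ℝ)) =
      (1 - ε) * (phi0 a S * dpVal a Finset.univ t ℓ +
        ∑ i ∈ S, phi a S i * dpVal a Finset.univ t (Function.update ℓ i (ℓ i + 1)))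
    rw [ih]
    have hsum : ∑ i ∈ S, phi a S i *
        Kf a ε t (((1 - ε) • fun j => (ℓ j : ℝ)) + (1 - ε) • (Pi.single i 1 : Fin n → ℝ)) =
        ∑ i ∈ S, phi a S i *
          ((1 - ε) * dpVal a Finset.univ t (Function.update ℓ i (ℓ i + 1))) := by
      refine Finset.sum_congr rfl fun i _ => ?_
      rw [hupd i, ih]
    rw [hsum]
    have hs2 : ∑ i ∈ S, phi a S i *
        ((1 - ε) * dpVal a Finset.univ t (Function.update ℓ i (ℓ i + 1))) =
        (1 - ε) * ∑ i ∈ S, phi a S i * dpVal a Finset.univ t (Function.update ℓ i (ℓ i + 1)) := by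
      rw [Finset.mul_sum]
      exact Finset.sum_congr rfl fun i _ => by ring
    rw [hs2]
    ring

/-- One-step comparison of mixture values. -/
lemma combo_le (a b : Fin n → ℝ) (ha : ∀ i, 0 ≤ a i) (hb : ∀ i, 0 ≤ b i)
    (ε : ℝ) (S : Finset (Fin n))
    (hφ : ∀ i ∈ S, (1 - ε) * phi a S i ≤ phi b S i)
    (M : ℝ) (Mi : Fin n → ℝ) (hMle : ∀ i ∈ S, M ≤ Mi i) :
    phi0 a S * M + ∑ i ∈ S, phi a S i * ((1 - ε) * Mi i + ε * M) ≤
      phi0 b S * M + ∑ i ∈ S, phi b S i * Mi i := by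
  have hkey : ∀ i ∈ S,
      (1 - ε) * (phi a S i * Mi i) + (phi b S i - (1 - ε) * phi a S i) * M ≤
        phi b S i * Mi i := by
    intro i hi
    have hc : 0 ≤ phi b S i - (1 - ε) * phi a S i := by linarith [hφ i hi]
    have := mul_le_mul_of_nonneg_left (hMle i hi) hc
    nlinarith [this]
  have hsum := Finset.sum_le_sum hkey
  rw [Finset.sum_add_distrib, ← Finset.mul_sum, ← Finset.sum_mul, Finset.sum_sub_distrib,
    ← Finset.mul_sum] at hsum
  have expand : ∑ i ∈ S, phi a S i * ((1 - ε) * Mi i + ε * M) =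
      (1 - ε) * (∑ i ∈ S, phi a S i * Mi i) + ε * (∑ i ∈ S, phi a S i) * M := by
    rw [Finset.mul_sum, mul_assoc, Finset.sum_mul, Finset.mul_sum, ← Finset.sum_add_distrib]
    exact Finset.sum_congr rfl fun i _ => by ring
  rw [expand, phi0_eq a ha S, phi0_eq b hb S]
  nlinarith [hsum]

/-- Main comparison lemma. -/
lemma Kf_le_dpVal (he : (Finset.univ : Finset (Fin n)).Nonempty)
    (a b : Fin n → ℝ) (ha : ∀ i, 0 ≤ a i) (hb : ∀ i, 0 ≤ b i)
    (ε : ℝ) (hε0 : 0 ≤ ε) (hε1 : ε ≤ 1)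
    (hφ : ∀ (S : Finset (Fin n)) (i : Fin n), i ∈ S → (1 - ε) * phi a S i ≤ phi b S i) :
    ∀ t (ℓ : Fin n → ℕ),
      Kf a ε t (fun i => (ℓ i : ℝ)) ≤ dpVal b Finset.univ t ℓ := by
  have h1ε : (0:ℝ) ≤ 1 - ε := by linarith
  intro t
  induction t with
  | zero =>
    intro ℓ
    rw [Kf, dif_pos he, dpVal]
    apply Finset.sup'_le
    intro i _
    exact Nat.cast_le.mpr (Finset.le_sup (Finset.mem_univ i))
  | succ t ih =>
    intro ℓ
    rw [Kf]
    apply Finset.sup'_le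
    intro S _
    have hxupd : ∀ i : Fin n, (fun j => ((ℓ j : ℕ) : ℝ)) + (Pi.single i 1 : Fin n → ℝ) =
        fun j => ((Function.update ℓ i (ℓ i + 1) j : ℕ) : ℝ) := by
      intro i; funext j
      by_cases hj : j = i
      · subst hj
        simp only [Pi.add_apply, Pi.single_eq_same, Function.update_self]
        push_cast
        ring
      · simp [Function.update_of_ne hj, Pi.single_apply, hj]
    have hconv : ∀ i : Fin n,
        Kf a ε t ((fun j => ((ℓ j : ℕ) : ℝ)) + (1 - ε) • (Pi.single i 1 : Fin n → ℝ)) ≤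
          (1 - ε) * Kf a ε t ((fun j => ((ℓ j : ℕ) : ℝ)) + (Pi.single i 1 : Fin n → ℝ)) +
            ε * Kf a ε t (fun j => ((ℓ j : ℕ) : ℝ)) := by
      intro i
      have hpt : (fun j => ((ℓ j : ℕ) : ℝ)) + (1 - ε) • (Pi.single i 1 : Fin n → ℝ) =
          (1 - ε) • ((fun j => ((ℓ j : ℕ) : ℝ)) + (Pi.single i 1 : Fin n → ℝ)) +
            ε • (fun j => ((ℓ j : ℕ) : ℝ)) := by
        funext j
        by_cases hj : j = i <;>
          simp [Pi.single_apply, hj, smul_eq_mul] <;> ring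
      rw [hpt]
      exact Kf_convex he a ha ε hε0 hε1 t _ _
    have hKx : Kf a ε t (fun j => ((ℓ j : ℕ) : ℝ)) ≤ dpVal b Finset.univ t ℓ := ih ℓ
    have hKxi : ∀ i : Fin n,
        Kf a ε t ((fun j => ((ℓ j : ℕ) : ℝ)) + (Pi.single i 1 : Fin n → ℝ)) ≤
          dpVal b Finset.univ t (Function.update ℓ i (ℓ i + 1)) := by
      intro i; rw [hxupd i]; exact ih _
    have hMle : ∀ i ∈ S, dpVal b Finset.univ t ℓ ≤
        dpVal b Finset.univ t (Function.update ℓ i (ℓ i + 1)) := by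
      intro i _
      apply dpVal_mono b hb Finset.univ t
      intro j
      by_cases hj : j = i
      · subst hj
        simp only [Function.update_self]
        exact Nat.le_succ _
      · simp only [Function.update_of_ne hj]
        exact le_refl _
    have step1 : phi0 a S * Kf a ε t (fun j => ((ℓ j : ℕ) : ℝ)) +
        ∑ i ∈ S, phi a S i *
          Kf a ε t ((fun j => ((ℓ j : ℕ) : ℝ)) + (1 - ε) • (Pi.single i 1 : Fin n → ℝ)) ≤
        phi0 a S * dpVal b Finset.univ t ℓ +
          ∑ i ∈ S, phi a S i *
            ((1 - ε) * dpVal b Finset.univ t (Function.update ℓ i (ℓ i + 1)) +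
              ε * dpVal b Finset.univ t ℓ) := by
      refine add_le_add (mul_le_mul_of_nonneg_left hKx (phi0_nonneg a ha S)) ?_
      refine Finset.sum_le_sum fun i _ => ?_
      refine mul_le_mul_of_nonneg_left ?_ (phi_nonneg a ha S i)
      refine le_trans (hconv i) ?_
      have hb1 := mul_le_mul_of_nonneg_left (hKxi i) h1ε
      have hb2 := mul_le_mul_of_nonneg_left hKx hε0
      linarith
    have step2 := combo_le a b ha hb ε S (fun i hi => hφ S i hi)
      (dpVal b Finset.univ t ℓ)
      (fun i => dpVal b Finset.univ t (Function.update ℓ i (ℓ i + 1))) hMle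
    have step3 := le_dpVal_succ b t ℓ S
    exact le_trans step1 (le_trans step2 step3)

end Aux

/-- Stability of the optimal dynamic value with respect to weight alterations: if
`(1-ε)·v_i ≤ ṽ_i ≤ v_i` for every product `i`, then
`(1-ε)·OPT^DP_v ≤ OPT^DP_ṽ ≤ (1/(1-ε))·OPT^DP_v` (over the full universe). -/
theorem dpOpt_stable_under_weight_alteration
    (n T : ℕ) (ε : ℝ) (hε0 : 0 < ε) (hε1 : ε < 1)
    (v vt : Fin n → ℝ) (hv : ∀ i, 0 < v i) (hvt : ∀ i, 0 < vt i)
    (hlow : ∀ i, (1 - ε) * v i ≤ vt i) (hhigh : ∀ i, vt i ≤ v i) :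
    (1 - ε) * dpOpt v Finset.univ T ≤ dpOpt vt Finset.univ T ∧
      dpOpt vt Finset.univ T ≤ (1 / (1 - ε)) * dpOpt v Finset.univ T := by
  have h1ε : (0:ℝ) < 1 - ε := by linarith
  rcases Nat.eq_zero_or_pos n with hn | hn
  · subst hn
    have hveq : v = vt := funext fun i => i.elim0
    subst hveq
    have hd : 0 ≤ dpOpt v Finset.univ T := dpVal_nonneg v Finset.univ T _
    constructor
    · nlinarith
    · have h1 : 1 ≤ 1 / (1 - ε) := by
        rw [le_div_iff₀ h1ε]; linarith
      nlinarith
  · have he : (Finset.univ : Finset (Fin n)).Nonempty := by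
      haveI : NeZero n := ⟨hn.ne'⟩
      exact Finset.univ_nonempty
    have hv0 : ∀ i, 0 ≤ v i := fun i => (hv i).le
    have hvt0 : ∀ i, 0 ≤ vt i := fun i => (hvt i).le
    have hφ1 : ∀ (S : Finset (Fin n)) (i : Fin n), i ∈ S →
        (1 - ε) * phi v S i ≤ phi vt S i := by
      intro S i _
      rw [phi, phi, ← mul_div_assoc]
      refine div_le_div₀ (hvt0 i) (hlow i) (den_pos vt hvt0 S) ?_
      exact add_le_add_right (Finset.sum_le_sum fun j _ => hhigh j) 1
    have hφ2 : ∀ (S : Finset (Fin n)) (i : Fin n), i ∈ S →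
        (1 - ε) * phi vt S i ≤ phi v S i := by
      intro S i _
      rw [phi, phi, ← mul_div_assoc, div_le_div_iff₀ (den_pos vt hvt0 S) (den_pos v hv0 S)]
      have hAB : (1 - ε) * (1 + ∑ j ∈ S, v j) ≤ 1 + ∑ j ∈ S, vt j := by
        have hs : ∑ j ∈ S, (1 - ε) * v j ≤ ∑ j ∈ S, vt j :=
          Finset.sum_le_sum fun j _ => hlow j
        rw [← Finset.mul_sum] at hs
        nlinarith
      have hBpos := den_pos vt hvt0 S
      nlinarith [mul_le_mul_of_nonneg_left hAB (hvt0 i),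
        mul_le_mul_of_nonneg_right (hhigh i) hBpos.le]
    constructor
    · have L : Kf v ε T (fun _ : Fin n => ((0:ℕ):ℝ)) ≤ dpVal vt Finset.univ T (fun _ => 0) :=
        Kf_le_dpVal he v vt hv0 hvt0 ε hε0.le hε1.le hφ1 T (fun _ => 0)
      have Sc : Kf v ε T (fun _ : Fin n => ((0:ℕ):ℝ)) =
          (1 - ε) * dpVal v Finset.univ T (fun _ => 0) := by
        have h := Kf_scale he v ε hε1.le T (fun _ => 0)
        convert h using 2
        funext j
        simp
      rw [dpOpt, dpOpt, ← Sc]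
      exact L
    · have L : Kf vt ε T (fun _ : Fin n => ((0:ℕ):ℝ)) ≤ dpVal v Finset.univ T (fun _ => 0) :=
        Kf_le_dpVal he vt v hvt0 hv0 ε hε0.le hε1.le hφ2 T (fun _ => 0)
      have Sc : Kf vt ε T (fun _ : Fin n => ((0:ℕ):ℝ)) =
          (1 - ε) * dpVal vt Finset.univ T (fun _ => 0) := by
        have h := Kf_scale he vt ε hε1.le T (fun _ => 0)
        convert h using 2
        funext j
        simp
      rw [dpOpt, dpOpt, one_div, inv_mul_eq_div, le_div_iff₀ h1ε]
      rw [Sc] at L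
      linarith
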